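/- arXiv:1512.01619 — 2 statements merged into one kernel-verified Lean document; each statement's English description precedes it below -/
import Mathlib

section
/- Let β ∈ ℝ, v₁, v₂ ∈ ℝ², and B₁, B₂, C be 2×2 real matrices. Suppose that span{v₂, C v₂} = ℝ², that βI + C is invertible, and that B₁ e^{−βt} v₁ + B₂ e^{tC} v₂ = 0 for all t in a nontrivial interval of ℝ. Then B₂ = 0 and B₁ v₁ = 0. -/
open Matrix

/-- The derivative of `t ↦ (B * exp(tC)) *ᵥ u`. -/
lemma aux_hasDerivAt (B C : Matrix (Fin 2) (Fin 2) ℝ) (u : Fin 2 → ℝ) (t : ℝ) :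
    HasDerivAt (fun s : ℝ => (B * NormedSpace.exp (s • C)).mulVec u)
      ((B * NormedSpace.exp (t • C)).mulVec (C.mulVec u)) t := by
  letI : SeminormedRing (Matrix (Fin 2) (Fin 2) ℝ) := Matrix.linftyOpSemiNormedRing
  letI : NormedRing (Matrix (Fin 2) (Fin 2) ℝ) := Matrix.linftyOpNormedRing
  letI : NormedAlgebra ℝ (Matrix (Fin 2) (Fin 2) ℝ) := Matrix.linftyOpNormedAlgebra
  have h1 : HasDerivAt (fun s : ℝ => NormedSpace.exp (s • C))
      (NormedSpace.exp (t • C) * C) t := hasDerivAt_exp_smul_const C t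
  let Llin : Matrix (Fin 2) (Fin 2) ℝ →ₗ[ℝ] (Fin 2 → ℝ) :=
    { toFun := fun M => (B * M).mulVec u
      map_add' := by intro M N; simp [Matrix.mul_add, Matrix.add_mulVec]
      map_smul' := by intro c M; simp [Matrix.mul_smul, Matrix.smul_mulVec] }
  let L := LinearMap.toContinuousLinearMap Llin
  have h2 := (L.hasFDerivAt (x := NormedSpace.exp (t • C))).comp_hasDerivAt t h1
  have h3 : L (NormedSpace.exp (t • C) * C)
      = (B * NormedSpace.exp (t • C)).mulVec (C.mulVec u) := by
    show (B * (NormedSpace.exp (t • C) * C)).mulVec u = _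
    rw [← Matrix.mul_assoc, ← Matrix.mulVec_mulVec]
  exact (congrArg (fun v => HasDerivAt _ v t) h3).mp h2

/-- If `(B * exp(tC)) *ᵥ u = 0` on an open interval, so is `(B * exp(tC)) *ᵥ (C *ᵥ u)`. -/
lemma aux_deriv_zero (B C : Matrix (Fin 2) (Fin 2) ℝ) (u : Fin 2 → ℝ) {a b : ℝ}
    (h : ∀ t ∈ Set.Ioo a b, (B * NormedSpace.exp (t • C)).mulVec u = 0) :
    ∀ t ∈ Set.Ioo a b, (B * NormedSpace.exp (t • C)).mulVec (C.mulVec u) = 0 := by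
  intro t ht
  have hd := aux_hasDerivAt B C u t
  have hev : (fun s : ℝ => (B * NormedSpace.exp (s • C)).mulVec u)
      =ᶠ[nhds t] fun _ => (0 : Fin 2 → ℝ) :=
    Filter.eventuallyEq_of_mem (Ioo_mem_nhds ht.1 ht.2) h
  have h0 : HasDerivAt (fun _ : ℝ => (0 : Fin 2 → ℝ))
      ((B * NormedSpace.exp (t • C)).mulVec (C.mulVec u)) t :=
    hd.congr_of_eventuallyEq hev.symm
  exact (h0.unique (hasDerivAt_const t 0))

/-- Lemma 270302-1: if `span{v₂, C v₂} = ℝ²`, `βI + C` is invertible, and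
`B₁ e^{-βt} v₁ + B₂ e^{tC} v₂ = 0` for all `t` in a nontrivial interval, then
`B₂ = 0` and `B₁ v₁ = 0`. -/
theorem stmt0 (β : ℝ) (v₁ v₂ : Fin 2 → ℝ) (B₁ B₂ C : Matrix (Fin 2) (Fin 2) ℝ)
    (hspan : Submodule.span ℝ ({v₂, C.mulVec v₂} : Set (Fin 2 → ℝ)) = ⊤)
    (hinv : IsUnit (β • (1 : Matrix (Fin 2) (Fin 2) ℝ) + C))
    (a b : ℝ) (hab : a < b)
    (heq : ∀ t ∈ Set.Ioo a b,
      B₁.mulVec (Real.exp (-β * t) • v₁)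
        + B₂.mulVec ((NormedSpace.exp (t • C)).mulVec v₂) = 0) :
    B₂ = 0 ∧ B₁.mulVec v₁ = 0 := by
  set w := B₁.mulVec v₁ with hw
  set P : Matrix (Fin 2) (Fin 2) ℝ := β • (1 : Matrix (Fin 2) (Fin 2) ℝ) + C with hP
  -- rewrite the hypothesis
  have heq' : ∀ t ∈ Set.Ioo a b,
      Real.exp (-β * t) • w + (B₂ * NormedSpace.exp (t • C)).mulVec v₂ = 0 := by
    intro t ht
    have := heq t ht
    rwa [Matrix.mulVec_smul, Matrix.mulVec_mulVec] at this
  -- Step 1: the derivative of the LHS is zero on the interval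
  have hstep1 : ∀ t ∈ Set.Ioo a b,
      (B₂ * NormedSpace.exp (t • C)).mulVec (P.mulVec v₂) = 0 := by
    intro t ht
    -- derivative of full expression
    have hexp : HasDerivAt (fun s : ℝ => Real.exp (-β * s)) (-β * Real.exp (-β * t)) t := by
      have h1 : HasDerivAt (fun s : ℝ => -β * s) (-β) t := by
        simpa using (hasDerivAt_id t).const_mul (-β)
      have := (Real.hasDerivAt_exp (-β * t)).comp t h1
      simpa [Function.comp_def, neg_mul, mul_comm] using this
    have hd1 : HasDerivAt (fun s : ℝ => Real.exp (-β * s) • w)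
        ((-β * Real.exp (-β * t)) • w) t := hexp.smul_const w
    have hd2 := aux_hasDerivAt B₂ C v₂ t
    have hd := hd1.add hd2
    have hev : (fun s : ℝ => Real.exp (-β * s) • w
        + (B₂ * NormedSpace.exp (s • C)).mulVec v₂) =ᶠ[nhds t] fun _ => (0 : Fin 2 → ℝ) :=
      Filter.eventuallyEq_of_mem (Ioo_mem_nhds ht.1 ht.2) heq'
    have h0 := (hd.congr_of_eventuallyEq hev.symm).unique (hasDerivAt_const t 0)
    -- h0 : 0 = (-β * exp(-βt)) • w + (B₂ exp(tC)) *ᵥ (C *ᵥ v₂)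
    have hwval : Real.exp (-β * t) • w = -(B₂ * NormedSpace.exp (t • C)).mulVec v₂ := by
      have := heq' t ht
      linear_combination (norm := module) this
    have h1 : (-β * Real.exp (-β * t)) • w
        = β • (B₂ * NormedSpace.exp (t • C)).mulVec v₂ := by
      rw [mul_smul, hwval]
      module
    rw [h1] at h0
    have hP2 : P.mulVec v₂ = β • v₂ + C.mulVec v₂ := by
      rw [hP, Matrix.add_mulVec, Matrix.smul_mulVec, Matrix.one_mulVec]
    rw [hP2, Matrix.mulVec_add, Matrix.mulVec_smul]
    exact h0
  -- Step 2: differentiate once more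
  have hstep2 := aux_deriv_zero B₂ C (P.mulVec v₂) hstep1
  -- pick a point in the interval
  set t₀ : ℝ := (a + b) / 2 with ht₀def
  have ht₀ : t₀ ∈ Set.Ioo a b := ⟨by rw [ht₀def]; linarith, by rw [ht₀def]; linarith⟩
  set E : Matrix (Fin 2) (Fin 2) ℝ := NormedSpace.exp (t₀ • C) with hE
  have hPC : P * C = C * P := by
    rw [hP]; noncomm_ring
  set M : Matrix (Fin 2) (Fin 2) ℝ := B₂ * E * P with hM
  have hM1 : M.mulVec v₂ = 0 := by
    rw [hM, ← Matrix.mulVec_mulVec]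
    exact hstep1 t₀ ht₀
  have hM2 : M.mulVec (C.mulVec v₂) = 0 := by
    have h := hstep2 t₀ ht₀
    simp only [Matrix.mulVec_mulVec] at h ⊢
    rw [hM, Matrix.mul_assoc, hPC]
    exact h
  -- M kills a spanning set, hence M = 0
  have hMlin : M.mulVecLin = (0 : (Fin 2 → ℝ) →ₗ[ℝ] (Fin 2 → ℝ)) := by
    apply LinearMap.ext_on hspan
    rintro x (rfl | rfl)
    · simpa using hM1
    · simpa using hM2
  have hM0 : M = 0 := by
    ext i j
    have := congrFun (congrArg DFunLike.coe hMlin) (Pi.single j 1)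
    simp only [Matrix.mulVecLin_apply, LinearMap.zero_apply] at this
    have := congrFun this i
    simpa [Matrix.mulVec_single] using this
  -- cancel the unit P
  have hBE : B₂ * E = 0 := by
    apply hinv.mul_right_cancel
    rw [zero_mul]
    show B₂ * E * P = 0
    rw [← hM, hM0]
  -- cancel the unit E
  have hB₂ : B₂ = 0 := by
    apply (Matrix.isUnit_exp (t₀ • C)).mul_right_cancel
    rw [zero_mul]
    exact hBE
  refine ⟨hB₂, ?_⟩
  have := heq' t₀ ht₀
  rw [hB₂] at this
  simp only [Matrix.zero_mul, Matrix.zero_mulVec, add_zero] at this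
  have hexp := Real.exp_ne_zero (-β * t₀)
  rcases smul_eq_zero.mp this with h | h
  · exact absurd h hexp
  · exact h
end

section
/- Let g* : ℝ → ℝ² be continuous, A*, A 2×2 real matrices, b, b* ∈ ℝ with b* > 0, C* = A* − b* I, and suppose bI + C* is invertible. Let G(M)_t = e^{tM} ∫_{t₀}^t e^{−sM} g*(s) ds and let λ*(t) = g*(t) + A* G(C*)_t. Then for a continuous function g(·): ∫_{t₀}^t e^{−b(t−s)} A λ*(s) ds satisfies g(t) + ∫_{t₀}^t e^{−b(t−s)} A λ*(s) ds = g(t) + A (b − b*)(bI + C*)⁻¹ G(−bI)_t + A A* (bI + C*)⁻¹ G(C*)_t for all t ≥ t₀. -/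
open Matrix MeasureTheory

section Aux

/-- entrywise derivative of `s ↦ exp (s • C)` -/
lemma expEntry_hasDerivAt (C : Matrix (Fin 2) (Fin 2) ℝ) (s : ℝ) (i j : Fin 2) :
    HasDerivAt (fun u : ℝ => NormedSpace.exp (u • C) i j)
      ((C * NormedSpace.exp (s • C)) i j) s := by
  letI : SeminormedRing (Matrix (Fin 2) (Fin 2) ℝ) := Matrix.linftyOpSemiNormedRing
  letI : NormedRing (Matrix (Fin 2) (Fin 2) ℝ) := Matrix.linftyOpNormedRing
  letI : NormedAlgebra ℝ (Matrix (Fin 2) (Fin 2) ℝ) := Matrix.linftyOpNormedAlgebra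
  have h := hasDerivAt_exp_smul_const' (𝕂 := ℝ) C s
  have h2 := ((Matrix.entryLinearMap ℝ ℝ i j).toContinuousLinearMap).hasFDerivAt.comp_hasDerivAt s h
  exact h2

lemma expEntry_continuous (C : Matrix (Fin 2) (Fin 2) ℝ) (i j : Fin 2) :
    Continuous fun s : ℝ => NormedSpace.exp (s • C) i j :=
  continuous_iff_continuousAt.2 fun s => (expEntry_hasDerivAt C s i j).continuousAt

lemma hasDerivAt_mulVec {M : ℝ → Matrix (Fin 2) (Fin 2) ℝ} {M' : Matrix (Fin 2) (Fin 2) ℝ}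
    {v : ℝ → Fin 2 → ℝ} {v' : Fin 2 → ℝ} {s : ℝ}
    (hM : ∀ i j, HasDerivAt (fun t => M t i j) (M' i j) s)
    (hv : HasDerivAt v v' s) :
    HasDerivAt (fun t => (M t).mulVec (v t)) (M'.mulVec (v s) + (M s).mulVec v') s := by
  rw [hasDerivAt_pi]
  intro i
  have hv' : ∀ j, HasDerivAt (fun t => v t j) (v' j) s := fun j => hasDerivAt_pi.1 hv j
  have : HasDerivAt (fun t => ∑ j, M t i j * v t j)
      (∑ j, (M' i j * v s j + M s i j * v' j)) s :=
    HasDerivAt.fun_sum fun j _ => (hM i j).mul (hv' j)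
  refine this.congr_deriv ?_
  simp only [Pi.add_apply, Matrix.mulVec, dotProduct, Finset.sum_add_distrib]

lemma continuous_mulVec_aux {M : ℝ → Matrix (Fin 2) (Fin 2) ℝ} {v : ℝ → Fin 2 → ℝ}
    (hM : ∀ i j, Continuous fun s => M s i j) (hv : Continuous v) :
    Continuous fun s => (M s).mulVec (v s) := by
  apply continuous_pi
  intro i
  simp only [Matrix.mulVec, dotProduct]
  exact continuous_finset_sum _ fun j _ => (hM i j).mul ((continuous_apply j).comp hv)

lemma exp_smul_one (c : ℝ) :
    NormedSpace.exp (c • (1 : Matrix (Fin 2) (Fin 2) ℝ)) = Real.exp c • 1 := by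
  letI : SeminormedRing (Matrix (Fin 2) (Fin 2) ℝ) := Matrix.linftyOpSemiNormedRing
  letI : NormedRing (Matrix (Fin 2) (Fin 2) ℝ) := Matrix.linftyOpNormedRing
  letI : NormedAlgebra ℝ (Matrix (Fin 2) (Fin 2) ℝ) := Matrix.linftyOpNormedAlgebra
  have h1 : c • (1 : Matrix (Fin 2) (Fin 2) ℝ) = algebraMap ℝ _ c :=
    (Algebra.algebraMap_eq_smul_one c).symm
  erw [h1, ← NormedSpace.algebraMap_exp_comm, Algebra.algebraMap_eq_smul_one,
    ← Real.exp_eq_exp_ℝ]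

end Aux

/-- Lemma 270228-1: with `G(M)_t = e^{tM} ∫_{t₀}^t e^{-sM} g*(s) ds` and
`λ*(t) = g*(t) + A* G(C*)_t`, for invertible `bI + C*` one has
`g(t) + ∫_{t₀}^t e^{-b(t-s)} A λ*(s) ds
  = g(t) + A(b - b*)(bI + C*)⁻¹ G(-bI)_t + A A* (bI + C*)⁻¹ G(C*)_t` for `t ≥ t₀`. -/
theorem stmt4 (gs : ℝ → Fin 2 → ℝ) (hgs : Continuous gs)
    (A As : Matrix (Fin 2) (Fin 2) ℝ) (b bs : ℝ) (hbs : 0 < bs)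
    (Cs : Matrix (Fin 2) (Fin 2) ℝ)
    (hCs : Cs = As - bs • (1 : Matrix (Fin 2) (Fin 2) ℝ))
    (hinv : IsUnit (b • (1 : Matrix (Fin 2) (Fin 2) ℝ) + Cs))
    (t₀ : ℝ)
    (G : Matrix (Fin 2) (Fin 2) ℝ → ℝ → Fin 2 → ℝ)
    (hG : ∀ M t, G M t =
      (NormedSpace.exp (t • M)).mulVec
        (∫ s in t₀..t, (NormedSpace.exp ((-s) • M)).mulVec (gs s)))
    (lams : ℝ → Fin 2 → ℝ)
    (hlams : ∀ t, lams t = gs t + As.mulVec (G Cs t))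
    (g : ℝ → Fin 2 → ℝ) (hg : Continuous g) :
    ∀ t ≥ t₀,
      g t + ∫ s in t₀..t, Real.exp (-b * (t - s)) • A.mulVec (lams s)
        = g t
          + ((b - bs) • (A * (b • (1 : Matrix (Fin 2) (Fin 2) ℝ) + Cs)⁻¹)).mulVec
              (G ((-b) • (1 : Matrix (Fin 2) (Fin 2) ℝ)) t)
          + (A * As * (b • (1 : Matrix (Fin 2) (Fin 2) ℝ) + Cs)⁻¹).mulVec (G Cs t) := by
  intro t ht
  set B : Matrix (Fin 2) (Fin 2) ℝ := b • (1 : Matrix (Fin 2) (Fin 2) ℝ) + Cs with hB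
  have hdet : IsUnit B.det := (Matrix.isUnit_iff_isUnit_det _).mp hinv
  have hBBinv : B * B⁻¹ = 1 := Matrix.mul_nonsing_inv _ hdet
  have hBinvB : B⁻¹ * B = 1 := Matrix.nonsing_inv_mul _ hdet
  -- notation
  set V : ℝ → Fin 2 → ℝ :=
    fun s => ∫ u in t₀..s, (NormedSpace.exp ((-u) • Cs)).mulVec (gs u) with hVdef
  set F : ℝ → Fin 2 → ℝ := fun s => (NormedSpace.exp (s • Cs)).mulVec (V s) with hFdef
  have hGF : ∀ s, G Cs s = F s := fun s => hG Cs s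
  -- continuity of the integrand defining V
  have hcontEneg : ∀ i j, Continuous fun s : ℝ => NormedSpace.exp ((-s) • Cs) i j := by
    intro i j
    exact (expEntry_continuous Cs i j).comp continuous_neg
  have hcontVint : Continuous fun s => (NormedSpace.exp ((-s) • Cs)).mulVec (gs s) :=
    continuous_mulVec_aux hcontEneg hgs
  have hV : ∀ s, HasDerivAt V ((NormedSpace.exp ((-s) • Cs)).mulVec (gs s)) s :=
    fun s => (hcontVint.integral_hasStrictDerivAt t₀ s).hasDerivAt
  -- derivative of F
  have hexpcancel : ∀ s : ℝ,
      NormedSpace.exp (s • Cs) * NormedSpace.exp ((-s) • Cs) = 1 := by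
    intro s
    rw [← Matrix.exp_add_of_commute]
    · rw [← add_smul, add_neg_cancel, zero_smul, NormedSpace.exp_zero]
    · exact (Commute.refl Cs).smul_left s |>.smul_right (-s)
  have hF : ∀ s, HasDerivAt F (Cs.mulVec (F s) + gs s) s := by
    intro s
    have h := hasDerivAt_mulVec (M' := Cs * NormedSpace.exp (s • Cs))
      (fun i j => expEntry_hasDerivAt Cs s i j) (hV s)
    convert h using 1
    rw [Matrix.mulVec_mulVec, Matrix.mulVec_mulVec, hexpcancel, Matrix.one_mulVec]
  have hFcont : Continuous F :=
    continuous_iff_continuousAt.2 fun s => (hF s).continuousAt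
  -- FTC for φ s = exp (b*s) • F s
  have hφ : ∀ s, HasDerivAt (fun u => Real.exp (b * u) • F u)
      (Real.exp (b * s) • (B.mulVec (F s) + gs s)) s := by
    intro s
    have hb : HasDerivAt (fun u => Real.exp (b * u)) (Real.exp (b * s) * b) s := by
      have := ((hasDerivAt_id s).const_mul b).exp
      simpa [mul_comm] using this
    have h := hb.smul (hF s)
    refine h.congr_deriv ?_
    have hBmul : B.mulVec (F s) = b • F s + Cs.mulVec (F s) := by
      rw [hB, Matrix.add_mulVec, Matrix.smul_mulVec, Matrix.one_mulVec]
    rw [hBmul]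
    simp only [smul_add, smul_smul]
    module
  have hcontφ' : Continuous fun s => Real.exp (b * s) • (B.mulVec (F s) + gs s) := by
    apply Continuous.fun_smul (by fun_prop)
    exact Continuous.add (continuous_mulVec_aux (fun i j => continuous_const) hFcont) hgs
  have hFt₀ : F t₀ = 0 := by
    simp [hFdef, hVdef, intervalIntegral.integral_same, Matrix.mulVec_zero]
  have hJ : ∫ s in t₀..t, Real.exp (b * s) • (B.mulVec (F s) + gs s)
      = Real.exp (b * t) • F t := by
    rw [intervalIntegral.integral_eq_sub_of_hasDerivAt (fun s _ => hφ s)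
      (hcontφ'.intervalIntegrable _ _), hFt₀, smul_zero, sub_zero]
  -- key integrals
  set W : Fin 2 → ℝ := ∫ s in t₀..t, Real.exp (b * s) • gs s with hW
  set K : Fin 2 → ℝ := ∫ s in t₀..t, Real.exp (b * s) • F s with hK
  have hcontW : Continuous fun s => Real.exp (b * s) • gs s := by fun_prop
  have hcontK : Continuous fun s => Real.exp (b * s) • F s := by
    exact Continuous.fun_smul (by fun_prop) hFcont
  -- commuting mulVec with interval integrals
  have hmulVec_int : ∀ (M : Matrix (Fin 2) (Fin 2) ℝ) (f : ℝ → Fin 2 → ℝ),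
      Continuous f →
      (∫ s in t₀..t, M.mulVec (f s)) = M.mulVec (∫ s in t₀..t, f s) := by
    intro M f hf
    have := (Matrix.mulVecLin M).toContinuousLinearMap.intervalIntegral_comp_comm
      (a := t₀) (b := t) (μ := volume) (hf.intervalIntegrable _ _)
    simpa using this
  have hcontBK : Continuous fun s => B.mulVec (Real.exp (b * s) • F s) :=
    continuous_mulVec_aux (fun i j => continuous_const) hcontK
  have hsplit : Real.exp (b * t) • F t = B.mulVec K + W := by
    rw [← hJ]
    have heq : ∀ s : ℝ, Real.exp (b * s) • (B.mulVec (F s) + gs s)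
        = B.mulVec (Real.exp (b * s) • F s) + Real.exp (b * s) • gs s := by
      intro s
      rw [Matrix.mulVec_smul, smul_add]
    simp_rw [heq]
    rw [intervalIntegral.integral_add (hcontBK.intervalIntegrable _ _)
      (hcontW.intervalIntegrable _ _), hmulVec_int B _ hcontK]
  have hKval : K = B⁻¹.mulVec (Real.exp (b * t) • F t - W) := by
    have h1' : B.mulVec K = Real.exp (b * t) • F t - W := by
      rw [hsplit, add_sub_cancel_right]
    calc K = (B⁻¹ * B).mulVec K := by rw [hBinvB, Matrix.one_mulVec]
      _ = B⁻¹.mulVec (B.mulVec K) := (Matrix.mulVec_mulVec _ _ _).symm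
      _ = B⁻¹.mulVec (Real.exp (b * t) • F t - W) := by rw [h1']
  -- G at the scalar matrix -b • 1
  have hGb : G ((-b) • (1 : Matrix (Fin 2) (Fin 2) ℝ)) t = Real.exp (-(b * t)) • W := by
    rw [hG]
    have h1 : t • ((-b) • (1 : Matrix (Fin 2) (Fin 2) ℝ)) = (-(b * t)) • 1 := by
      rw [smul_smul]; ring_nf
    have h2 : ∀ s : ℝ, (-s) • ((-b) • (1 : Matrix (Fin 2) (Fin 2) ℝ)) = (b * s) • 1 := by
      intro s; rw [smul_smul]; ring_nf
    simp_rw [h1, h2, exp_smul_one, Matrix.smul_mulVec, Matrix.one_mulVec]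
    rfl
  -- the left-hand integral
  have hXint : (∫ s in t₀..t, Real.exp (-b * (t - s)) • A.mulVec (lams s))
      = Real.exp (-(b * t)) • (A.mulVec W + (A * As).mulVec K) := by
    have h1 : ∀ s : ℝ, Real.exp (-b * (t - s)) • A.mulVec (lams s)
        = Real.exp (-(b * t)) • (A.mulVec (Real.exp (b * s) • gs s)
            + (A * As).mulVec (Real.exp (b * s) • F s)) := by
      intro s
      rw [hlams, hGF]
      rw [show Real.exp (-b * (t - s)) = Real.exp (-(b * t)) * Real.exp (b * s) by
        rw [← Real.exp_add]; ring_nf]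
      simp only [Matrix.mulVec_add, Matrix.mulVec_mulVec, Matrix.mulVec_smul, smul_add,
        smul_smul]
    simp_rw [h1]
    rw [intervalIntegral.integral_smul]
    congr 1
    rw [intervalIntegral.integral_add
      ((continuous_mulVec_aux (M := fun _ => A) (fun i j => continuous_const)
        hcontW).intervalIntegrable _ _)
      ((continuous_mulVec_aux (M := fun _ => A * As) (fun i j => continuous_const)
        hcontK).intervalIntegrable _ _),
      hmulVec_int A (fun s => Real.exp (b * s) • gs s) hcontW,
      hmulVec_int (A * As) (fun s => Real.exp (b * s) • F s) hcontK]
  -- matrix identity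
  have hBAs : B - As = (b - bs) • (1 : Matrix (Fin 2) (Fin 2) ℝ) := by
    rw [hB, hCs]; module
  have hA : A - A * As * B⁻¹ = (b - bs) • (A * B⁻¹) := by
    have hABB : A * B * B⁻¹ = A := by rw [mul_assoc, hBBinv, mul_one]
    calc A - A * As * B⁻¹ = A * B * B⁻¹ - A * As * B⁻¹ := by rw [hABB]
      _ = A * (B - As) * B⁻¹ := by rw [mul_sub, sub_mul]
      _ = ((b - bs) • A) * B⁻¹ := by rw [hBAs, mul_smul_comm, mul_one]
      _ = (b - bs) • (A * B⁻¹) := by rw [smul_mul_assoc]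
  have hY : ((b - bs) • (A * B⁻¹)).mulVec W = A.mulVec W - (A * As * B⁻¹).mulVec W := by
    rw [← hA, Matrix.sub_mulVec]
  have hKmul : (A * As).mulVec K
      = Real.exp (b * t) • (A * As * B⁻¹).mulVec (F t) - (A * As * B⁻¹).mulVec W := by
    rw [hKval, Matrix.mulVec_mulVec, Matrix.mulVec_sub, Matrix.mulVec_smul]
  have hee : Real.exp (-(b * t)) * Real.exp (b * t) = 1 := by
    rw [← Real.exp_add, neg_add_cancel, Real.exp_zero]
  rw [add_assoc]
  congr 1
  rw [hXint, hGb, hGF, hKmul, Matrix.mulVec_smul, hY]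
  rw [smul_add, smul_sub, smul_sub, smul_smul, hee, one_smul]
  abel
end
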